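/- Let ρ₁ and ρ₂ be Borel probability measures on S. Assume: (i) for i = 1, 2, lim_{L→∞} (1/|Λ_L|²) Σ_{x,y∈Λ_L} | ρ_i(σ_x σ_y) − ρ_i(σ_x) ρ_i(σ_y) | = 0, where ρ(h) denotes ∫ h dρ; and (ii) for ρ₁×ρ₂-almost every (σ, σ′) the spin overlap R(σ,σ′) = lim_{L→∞} (1/|Λ_L|) Σ_{x∈Λ_L} σ_x σ′_x exists. Then there is a constant q such that R(σ,σ′) = q for ρ₁×ρ₂-almost every (σ, σ′). -/

import Mathlib

open MeasureTheory Filter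

noncomputable section

/-- Sites of `ℤ^d`. -/
abbrev Site (d : ℕ) := Fin d → ℤ
/-- Spin configurations on `ℤ^d`. -/
abbrev Config (d : ℕ) := Site d → Bool

/-- The spin value `±1` of a Boolean. -/
def spin (b : Bool) : ℝ := if b then 1 else -1

/-- The box `Λ_L = {−L,…,L}^d`. -/
def box (d L : ℕ) : Finset (Site d) := Fintype.piFinset fun _ => Finset.Icc (-(L : ℤ)) (L : ℤ)

/-- The spin overlap in the box `Λ_L`: `(1/|Λ_L|) Σ_{x∈Λ_L} σ_x σ′_x`. -/
def spinOverlapL (d L : ℕ) (σ σ' : Config d) : ℝ :=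
  ((box d L).card : ℝ)⁻¹ * ∑ x ∈ box d L, spin (σ x) * spin (σ' x)

/- ### Auxiliary lemmas -/

lemma abs_spin (b : Bool) : |spin b| = 1 := by cases b <;> simp [spin]

lemma measurable_spinx {d : ℕ} (x : Site d) : Measurable fun σ : Config d => spin (σ x) :=
  (Measurable.of_discrete (f := spin)).comp (measurable_pi_apply x)

lemma integrable_of_bound {α : Type*} [MeasurableSpace α] {μ : Measure α}
    [IsProbabilityMeasure μ] {f : α → ℝ} (hm : AEStronglyMeasurable f μ) (C : ℝ)
    (h : ∀ a, |f a| ≤ C) : Integrable f μ :=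
  (integrable_const C).mono' hm (ae_of_all _ fun a => by simpa using h a)

lemma abs_integral_le_one {α : Type*} [MeasurableSpace α] {μ : Measure α}
    [IsProbabilityMeasure μ] {f : α → ℝ} (hi : Integrable f μ) (h : ∀ a, |f a| ≤ 1) :
    |∫ a, f a ∂μ| ≤ 1 := by
  have hs : |∫ a, f a ∂μ| ≤ ∫ a, |f a| ∂μ := by
    simpa [Real.norm_eq_abs] using norm_integral_le_integral_norm (μ := μ) f
  calc |∫ a, f a ∂μ| ≤ ∫ a, |f a| ∂μ := hs
    _ ≤ ∫ _a, (1 : ℝ) ∂μ := integral_mono hi.abs (integrable_const 1) h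
    _ = 1 := by simp

lemma integrable_spinx {d : ℕ} (ρ : Measure (Config d)) [IsProbabilityMeasure ρ] (x : Site d) :
    Integrable (fun σ => spin (σ x)) ρ :=
  integrable_of_bound (measurable_spinx x).aestronglyMeasurable 1 fun a => (abs_spin _).le

lemma integrable_spinxy {d : ℕ} (ρ : Measure (Config d)) [IsProbabilityMeasure ρ] (x y : Site d) :
    Integrable (fun σ => spin (σ x) * spin (σ y)) ρ :=
  integrable_of_bound ((measurable_spinx x).mul (measurable_spinx y)).aestronglyMeasurable 1
    fun a => by rw [abs_mul, abs_spin, abs_spin, mul_one]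

lemma card_box_pos (d L : ℕ) : 0 < (box d L).card := by
  refine Finset.card_pos.2 ⟨fun _ => 0, ?_⟩
  simp [box, Fintype.mem_piFinset]

lemma abs_spinOverlapL_le_one (d L : ℕ) (σ σ' : Config d) : |spinOverlapL d L σ σ'| ≤ 1 := by
  have hc : (0:ℝ) < ((box d L).card : ℝ) := by exact_mod_cast card_box_pos d L
  rw [spinOverlapL, abs_mul, abs_of_nonneg (inv_nonneg.2 hc.le)]
  calc ((box d L).card : ℝ)⁻¹ * |∑ x ∈ box d L, spin (σ x) * spin (σ' x)|
      ≤ ((box d L).card : ℝ)⁻¹ * ∑ x ∈ box d L, |spin (σ x) * spin (σ' x)| := by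
        gcongr; exact Finset.abs_sum_le_sum_abs _ _
    _ = ((box d L).card : ℝ)⁻¹ * ((box d L).card : ℝ) := by
        simp [abs_mul, abs_spin]
    _ = 1 := inv_mul_cancel₀ hc.ne'

lemma measurable_spinOverlapL (d L : ℕ) :
    Measurable fun p : Config d × Config d => spinOverlapL d L p.1 p.2 := by
  unfold spinOverlapL
  exact (Finset.measurable_sum _ fun x _ =>
    (((measurable_spinx x).comp measurable_fst).mul
      ((measurable_spinx x).comp measurable_snd))).const_mul _

lemma key_abs (b1 b2 a1 a2 : ℝ) (hb1 : |b1| ≤ 1) (ha2 : |a2| ≤ 1) :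
    |b1 * b2 - a1 * a2| ≤ |b1 - a1| + |b2 - a2| := by
  have h : b1 * b2 - a1 * a2 = b1 * (b2 - a2) + a2 * (b1 - a1) := by ring
  rw [h]
  calc |b1 * (b2 - a2) + a2 * (b1 - a1)| ≤ |b1 * (b2 - a2)| + |a2 * (b1 - a1)| := abs_add_le _ _
    _ = |b1| * |b2 - a2| + |a2| * |b1 - a1| := by rw [abs_mul, abs_mul]
    _ ≤ 1 * |b2 - a2| + 1 * |b1 - a1| :=
        add_le_add (mul_le_mul_of_nonneg_right hb1 (abs_nonneg _))
          (mul_le_mul_of_nonneg_right ha2 (abs_nonneg _))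
    _ = |b1 - a1| + |b2 - a2| := by ring

section Computations

variable {d : ℕ} (ρ₁ ρ₂ : Measure (Config d)) [IsProbabilityMeasure ρ₁] [IsProbabilityMeasure ρ₂]

/-- The mean of the overlap under the product measure. -/
lemma integral_overlap (L : ℕ) :
    ∫ p, spinOverlapL d L p.1 p.2 ∂(ρ₁.prod ρ₂) =
      ((box d L).card : ℝ)⁻¹ * ∑ x ∈ box d L,
        (∫ σ, spin (σ x) ∂ρ₁) * ∫ σ, spin (σ x) ∂ρ₂ := by
  unfold spinOverlapL
  rw [integral_const_mul, integral_finset_sum]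
  · congr 1
    refine Finset.sum_congr rfl fun x _ => ?_
    exact integral_prod_mul (fun σ : Config d => spin (σ x)) (fun σ : Config d => spin (σ x))
  · intro x _
    exact integrable_of_bound
      (((measurable_spinx x).comp measurable_fst).mul
        ((measurable_spinx x).comp measurable_snd)).aestronglyMeasurable 1
      fun a => by rw [abs_mul, abs_spin, abs_spin, mul_one]

/-- The second moment of the overlap under the product measure. -/
lemma integral_overlap_sq (L : ℕ) :
    ∫ p, (spinOverlapL d L p.1 p.2) ^ 2 ∂(ρ₁.prod ρ₂) =
      (((box d L).card : ℝ)⁻¹) ^ 2 * ∑ x ∈ box d L, ∑ y ∈ box d L,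
        (∫ σ, spin (σ x) * spin (σ y) ∂ρ₁) * ∫ σ, spin (σ x) * spin (σ y) ∂ρ₂ := by
  have hrw : ∀ p : Config d × Config d, (spinOverlapL d L p.1 p.2) ^ 2 =
      (((box d L).card : ℝ)⁻¹) ^ 2 * ∑ x ∈ box d L, ∑ y ∈ box d L,
        (spin (p.1 x) * spin (p.1 y)) * (spin (p.2 x) * spin (p.2 y)) := by
    intro p
    rw [spinOverlapL, mul_pow, sq (∑ x ∈ box d L, spin (p.1 x) * spin (p.2 x)),
      Finset.sum_mul_sum]
    congr 1
    refine Finset.sum_congr rfl fun x _ => Finset.sum_congr rfl fun y _ => ?_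
    ring
  simp only [hrw]
  rw [integral_const_mul, integral_finset_sum]
  · congr 1
    refine Finset.sum_congr rfl fun x _ => ?_
    rw [integral_finset_sum]
    · refine Finset.sum_congr rfl fun y _ => ?_
      exact integral_prod_mul (fun σ : Config d => spin (σ x) * spin (σ y))
        (fun σ : Config d => spin (σ x) * spin (σ y))
    · intro y _
      exact integrable_of_bound
        ((((measurable_spinx x).mul (measurable_spinx y)).comp measurable_fst).mul
          (((measurable_spinx x).mul (measurable_spinx y)).comp measurable_snd)).aestronglyMeasurable
        1 fun a => by simp [abs_mul, abs_spin]
  · intro x _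
    refine integrable_finset_sum _ fun y _ => ?_
    exact integrable_of_bound
      ((((measurable_spinx x).mul (measurable_spinx y)).comp measurable_fst).mul
        (((measurable_spinx x).mul (measurable_spinx y)).comp measurable_snd)).aestronglyMeasurable
      1 fun a => by simp [abs_mul, abs_spin]

end Computations

/-- overlaps of mixing states are a.s. constant.
Let `ρ₁, ρ₂` be Borel probability measures on `S` whose truncated two-point correlations
average to zero in the sense (i), and suppose the spin overlap `R(σ,σ′)` exists for
`ρ₁×ρ₂`-a.e. `(σ,σ′)`.  Then there is a constant `q` with `R(σ,σ′) = q` for `ρ₁×ρ₂`-a.e.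
`(σ,σ′)`. -/
theorem overlap_constant_between_states (d : ℕ) (ρ₁ ρ₂ : Measure (Config d))
    [IsProbabilityMeasure ρ₁] [IsProbabilityMeasure ρ₂]
    (h1 : ∀ ρ ∈ ({ρ₁, ρ₂} : Set (Measure (Config d))),
      Tendsto (fun L => (((box d L).card : ℝ) ^ 2)⁻¹ *
          ∑ x ∈ box d L, ∑ y ∈ box d L,
            |(∫ σ, spin (σ x) * spin (σ y) ∂ρ)
              - (∫ σ, spin (σ x) ∂ρ) * ∫ σ, spin (σ y) ∂ρ|)
        atTop (nhds 0))
    (h2 : ∀ᵐ p ∂(ρ₁.prod ρ₂), ∃ r : ℝ,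
      Tendsto (fun L => spinOverlapL d L p.1 p.2) atTop (nhds r)) :
    ∃ q : ℝ, ∀ᵐ p ∂(ρ₁.prod ρ₂),
      Tendsto (fun L => spinOverlapL d L p.1 p.2) atTop (nhds q) := by
  classical
  set μ := ρ₁.prod ρ₂ with hμ
  set F : ℕ → Config d × Config d → ℝ := fun L p => spinOverlapL d L p.1 p.2 with hF
  -- the a.e. limit function
  set R : Config d × Config d → ℝ := fun p =>
    if h : ∃ r, Tendsto (fun L => spinOverlapL d L p.1 p.2) atTop (nhds r)
    then h.choose else 0 with hRdef
  have hR : ∀ᵐ p ∂μ, Tendsto (fun L => F L p) atTop (nhds (R p)) := by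
    filter_upwards [h2] with p hp
    simp only [hRdef, dif_pos hp]
    exact hp.choose_spec
  have hFmeas : ∀ L, AEStronglyMeasurable (F L) μ := fun L =>
    (measurable_spinOverlapL d L).aestronglyMeasurable
  have hFbd : ∀ L p, |F L p| ≤ 1 := fun L p => abs_spinOverlapL_le_one d L p.1 p.2
  have hRmeas : AEStronglyMeasurable R μ :=
    aestronglyMeasurable_of_tendsto_ae atTop hFmeas hR
  have hRbd : ∀ᵐ p ∂μ, |R p| ≤ 1 := by
    filter_upwards [hR] with p hp
    exact le_of_tendsto hp.abs (Eventually.of_forall fun L => hFbd L p)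
  have hRint : Integrable R μ :=
    (integrable_const (1:ℝ)).mono' hRmeas (hRbd.mono fun p hp => by simpa using hp)
  have hR2meas : AEStronglyMeasurable (fun p => R p ^ 2) μ :=
    (hRmeas.mul hRmeas).congr (ae_of_all _ fun p => (sq (R p)).symm)
  have hR2int : Integrable (fun p => R p ^ 2) μ := by
    refine (integrable_const (1:ℝ)).mono' hR2meas (hRbd.mono fun p hp => ?_)
    rw [Real.norm_eq_abs, abs_pow]
    exact pow_le_one₀ (abs_nonneg _) hp
  -- convergence of means and second moments
  have hlim1 : Tendsto (fun L => ∫ p, F L p ∂μ) atTop (nhds (∫ p, R p ∂μ)) :=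
    tendsto_integral_of_dominated_convergence (fun _ => (1:ℝ)) hFmeas (integrable_const 1)
      (fun L => ae_of_all _ fun p => by simpa using hFbd L p) hR
  have hlim2 : Tendsto (fun L => ∫ p, (F L p) ^ 2 ∂μ) atTop (nhds (∫ p, R p ^ 2 ∂μ)) := by
    refine tendsto_integral_of_dominated_convergence (fun _ => (1:ℝ))
      (fun L => ((hFmeas L).mul (hFmeas L)).congr (ae_of_all _ fun p => (sq (F L p)).symm))
      (integrable_const 1) (fun L => ae_of_all _ fun p => ?_) (hR.mono fun p hp => hp.pow 2)
    rw [Real.norm_eq_abs, abs_pow]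
    exact pow_le_one₀ (abs_nonneg _) (hFbd L p)
  -- variance bound
  have hvar : ∀ L, |∫ p, (F L p) ^ 2 ∂μ - (∫ p, F L p ∂μ) ^ 2| ≤
      ((((box d L).card : ℝ) ^ 2)⁻¹ * ∑ x ∈ box d L, ∑ y ∈ box d L,
        |(∫ σ, spin (σ x) * spin (σ y) ∂ρ₁)
          - (∫ σ, spin (σ x) ∂ρ₁) * ∫ σ, spin (σ y) ∂ρ₁|) +
      ((((box d L).card : ℝ) ^ 2)⁻¹ * ∑ x ∈ box d L, ∑ y ∈ box d L,
        |(∫ σ, spin (σ x) * spin (σ y) ∂ρ₂)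
          - (∫ σ, spin (σ x) ∂ρ₂) * ∫ σ, spin (σ y) ∂ρ₂|) := by
    intro L
    set c : ℝ := ((box d L).card : ℝ)⁻¹ with hc
    have hc0 : (0:ℝ) ≤ c := inv_nonneg.2 (Nat.cast_nonneg _)
    set A1 : Site d → ℝ := fun x => ∫ σ, spin (σ x) ∂ρ₁ with hA1
    set A2 : Site d → ℝ := fun x => ∫ σ, spin (σ x) ∂ρ₂ with hA2
    set B1 : Site d → Site d → ℝ := fun x y => ∫ σ, spin (σ x) * spin (σ y) ∂ρ₁ with hB1
    set B2 : Site d → Site d → ℝ := fun x y => ∫ σ, spin (σ x) * spin (σ y) ∂ρ₂ with hB2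
    have hA1b : ∀ x, |A1 x| ≤ 1 := fun x =>
      abs_integral_le_one (integrable_spinx ρ₁ x) fun a => (abs_spin _).le
    have hA2b : ∀ x, |A2 x| ≤ 1 := fun x =>
      abs_integral_le_one (integrable_spinx ρ₂ x) fun a => (abs_spin _).le
    have hB1b : ∀ x y, |B1 x y| ≤ 1 := fun x y =>
      abs_integral_le_one (integrable_spinxy ρ₁ x y)
        fun a => by rw [abs_mul, abs_spin, abs_spin, mul_one]
    have hmean := integral_overlap ρ₁ ρ₂ L
    have hsq := integral_overlap_sq ρ₁ ρ₂ L
    have hdiff : ∫ p, (F L p) ^ 2 ∂μ - (∫ p, F L p ∂μ) ^ 2 =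
        c ^ 2 * ∑ x ∈ box d L, ∑ y ∈ box d L,
          (B1 x y * B2 x y - (A1 x * A1 y) * (A2 x * A2 y)) := by
      simp only [hF, hμ, hA1, hA2, hB1, hB2]
      rw [hsq, hmean, mul_pow,
        sq (∑ x ∈ box d L, (∫ σ, spin (σ x) ∂ρ₁) * ∫ σ, spin (σ x) ∂ρ₂),
        Finset.sum_mul_sum, ← mul_sub, ← Finset.sum_sub_distrib]
      congr 1
      refine Finset.sum_congr rfl fun x _ => ?_
      rw [← Finset.sum_sub_distrib]
      refine Finset.sum_congr rfl fun y _ => ?_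
      ring
    rw [hdiff, abs_mul, abs_of_nonneg (sq_nonneg c)]
    have hcsq : (((box d L).card : ℝ) ^ 2)⁻¹ = c ^ 2 := by rw [hc, inv_pow]
    rw [hcsq, ← mul_add]
    refine mul_le_mul_of_nonneg_left ?_ (sq_nonneg c)
    calc |∑ x ∈ box d L, ∑ y ∈ box d L,
          (B1 x y * B2 x y - (A1 x * A1 y) * (A2 x * A2 y))|
        ≤ ∑ x ∈ box d L, |∑ y ∈ box d L,
          (B1 x y * B2 x y - (A1 x * A1 y) * (A2 x * A2 y))| := Finset.abs_sum_le_sum_abs _ _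
      _ ≤ ∑ x ∈ box d L, ∑ y ∈ box d L,
          |B1 x y * B2 x y - (A1 x * A1 y) * (A2 x * A2 y)| :=
          Finset.sum_le_sum fun x _ => Finset.abs_sum_le_sum_abs _ _
      _ ≤ ∑ x ∈ box d L, ∑ y ∈ box d L,
          (|B1 x y - A1 x * A1 y| + |B2 x y - A2 x * A2 y|) := by
          refine Finset.sum_le_sum fun x _ => Finset.sum_le_sum fun y _ => ?_
          refine key_abs _ _ _ _ (hB1b x y) ?_
          rw [abs_mul]
          exact mul_le_one₀ (hA2b x) (abs_nonneg _) (hA2b y)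
      _ = ∑ x ∈ box d L, ∑ y ∈ box d L, (|B1 x y - A1 x * A1 y|) +
          ∑ x ∈ box d L, ∑ y ∈ box d L, (|B2 x y - A2 x * A2 y|) := by
          rw [← Finset.sum_add_distrib]
          exact Finset.sum_congr rfl fun x _ => Finset.sum_add_distrib
  -- variance tends to zero
  have hT : Tendsto (fun L =>
      ((((box d L).card : ℝ) ^ 2)⁻¹ * ∑ x ∈ box d L, ∑ y ∈ box d L,
        |(∫ σ, spin (σ x) * spin (σ y) ∂ρ₁)
          - (∫ σ, spin (σ x) ∂ρ₁) * ∫ σ, spin (σ y) ∂ρ₁|) +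
      ((((box d L).card : ℝ) ^ 2)⁻¹ * ∑ x ∈ box d L, ∑ y ∈ box d L,
        |(∫ σ, spin (σ x) * spin (σ y) ∂ρ₂)
          - (∫ σ, spin (σ x) ∂ρ₂) * ∫ σ, spin (σ y) ∂ρ₂|)) atTop (nhds 0) := by
    have := (h1 ρ₁ (Or.inl rfl)).add (h1 ρ₂ (Or.inr rfl))
    simpa using this
  have hvar0 : Tendsto (fun L => ∫ p, (F L p) ^ 2 ∂μ - (∫ p, F L p ∂μ) ^ 2) atTop (nhds 0) :=
    squeeze_zero_norm (fun L => by simpa [Real.norm_eq_abs] using hvar L) hT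
  -- conclude Var(R) = 0
  set q : ℝ := ∫ p, R p ∂μ with hq
  have hVarR : ∫ p, R p ^ 2 ∂μ - q ^ 2 = 0 :=
    tendsto_nhds_unique (hlim2.sub (hlim1.pow 2)) hvar0
  -- ∫ (R - q)^2 = 0
  have hGeq : (fun p => (R p - q) ^ 2) = fun p => (R p ^ 2 - 2 * q * R p) + q ^ 2 := by
    funext p; ring
  have hGint : Integrable (fun p => (R p - q) ^ 2) μ := by
    rw [hGeq]
    exact (hR2int.sub (hRint.const_mul (2 * q))).add (integrable_const _)
  have hGzero : ∫ p, (R p - q) ^ 2 ∂μ = 0 := by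
    have hi1 : Integrable (fun p => R p ^ 2 - 2 * q * R p) μ := by
      exact hR2int.sub (hRint.const_mul (2 * q))
    have hi2 : Integrable (fun p => 2 * q * R p) μ := by
      exact hRint.const_mul (2 * q)
    rw [hGeq, integral_add hi1 (integrable_const _),
      integral_sub hR2int hi2, integral_const_mul, integral_const]
    simp only [measure_univ, ENNReal.toReal_one, probReal_univ, smul_eq_mul, one_mul]
    rw [← hq]
    nlinarith [hVarR]
  have hae : ∀ᵐ p ∂μ, (R p - q) ^ 2 = 0 :=
    (integral_eq_zero_iff_of_nonneg_ae (ae_of_all _ fun p => sq_nonneg _) hGint).1 hGzero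
  refine ⟨q, ?_⟩
  filter_upwards [hR, hae] with p hp hsq
  have : R p = q := by
    have := pow_eq_zero_iff (n := 2) (by norm_num) |>.1 hsq
    linarith [sub_eq_zero.1 this]
  rwa [this] at hp
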